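/- Let p be an odd prime and G a finite p-group that is 2-generated (d(G) = 2) and not powerful. Then G is full with respect to every maximal subgroup: for each maximal subgroup C and each maximal subgroup M ≠ C, there exists a subgroup K ≤ M of index p² in G that is not normal in G, such that K ∩ C is normal in G and contains G^p. -/

import Mathlib

open scoped commutatorElement

section Aux

/-- If a group is generated by two commuting elements, it is commutative. -/
private lemma aux_comm_of_closure_pair {H : Type*} [Group H] {a b : H} (hab : a * b = b * a)
    (htop : Subgroup.closure ({a, b} : Set H) = ⊤) (x y : H) : x * y = y * x := by
  have hcen : ∀ z ∈ ({a, b} : Set H), z ∈ Subgroup.center H := by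
    intro z hz
    rw [Subgroup.mem_center_iff]
    intro g
    have hg : g ∈ Subgroup.closure ({a, b} : Set H) := htop ▸ Subgroup.mem_top g
    refine Subgroup.closure_induction (p := fun w _ => w * z = z * w) ?_ ?_ ?_ ?_ hg
    · intro w hw
      rcases hz with rfl | hz <;> rcases hw with rfl | hw
      · rfl
      · rw [Set.mem_singleton_iff] at hw; subst hw; exact hab.symm
      · rw [Set.mem_singleton_iff] at hz; subst hz; exact hab
      · rw [Set.mem_singleton_iff] at hz hw; subst hz; subst hw; rfl
    · simp
    · intro u v _ _ ihu ihv
      rw [mul_assoc, ihv, ← mul_assoc, ihu, mul_assoc]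
    · intro u _ ihu
      calc u⁻¹ * z = u⁻¹ * z * u * u⁻¹ := by group
        _ = u⁻¹ * (u * z) * u⁻¹ := by rw [mul_assoc u⁻¹ z u, ← ihu]
        _ = z * u⁻¹ := by group
  have htople : (⊤ : Subgroup H) ≤ Subgroup.center H := by
    rw [← htop]; exact (Subgroup.closure_le _).mpr hcen
  exact Subgroup.mem_center_iff.mp (htople (Subgroup.mem_top y)) x

/-- Reduction of integer exponents modulo `p` for elements satisfying `h ^ p = 1`. -/
private lemma aux_zpow_val {H : Type*} [Group H] {p : ℕ} (hp : p.Prime) {h : H} (hh : h ^ p = 1)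
    (m : ℤ) : h ^ m = h ^ ((m : ZMod p)).val := by
  haveI : NeZero p := ⟨hp.pos.ne'⟩
  have key : (p : ℤ) ∣ m - ((m : ZMod p)).val := by
    have h0 : ((m - (((m : ZMod p)).val : ℤ) : ℤ) : ZMod p) = 0 := by
      push_cast
      rw [ZMod.natCast_rightInverse (m : ZMod p), sub_self]
    exact (ZMod.intCast_zmod_eq_zero_iff_dvd _ p).mp h0
  obtain ⟨t, ht⟩ := key
  have hm : m = (((m : ZMod p)).val : ℤ) + (p : ℤ) * t := by linarith
  conv_lhs => rw [hm]
  rw [zpow_add, zpow_mul, zpow_natCast, zpow_natCast, hh, one_zpow, mul_one]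

/-- Every maximal subgroup of a finite `p`-group is normal, contains all `p`-th powers,
and contains the commutator subgroup. -/
private lemma aux_coatom {G : Type*} [Group G] [Finite G] {p : ℕ} (hp : p.Prime)
    (hG : IsPGroup p G) {M : Subgroup G} (hM : IsCoatom M) :
    M.Normal ∧ (∀ x : G, x ^ p ∈ M) ∧ commutator G ≤ M := by
  haveI : Fact p.Prime := ⟨hp⟩
  haveI := hG.isNilpotent
  have hMn : M.Normal := Subgroup.NormalizerCondition.normal_of_coatom M normalizerCondition_of_isNilpotent hM
  haveI := hMn
  have hsub : ∀ S : Subgroup (G ⧸ M), S = ⊥ ∨ S = ⊤ := by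
    intro S
    have hMle : M ≤ S.comap (QuotientGroup.mk' M) := by
      intro g hg
      have h1 : (QuotientGroup.mk' M) g = 1 := (QuotientGroup.eq_one_iff g).mpr hg
      simp only [Subgroup.mem_comap, h1]
      exact S.one_mem
    rcases eq_or_lt_of_le hMle with heq | hlt
    · left
      rw [← Subgroup.map_comap_eq_self_of_surjective (QuotientGroup.mk'_surjective M) S, ← heq,
        eq_bot_iff]
      rintro q ⟨g, hg, rfl⟩
      exact (QuotientGroup.eq_one_iff g).mpr hg
    · right
      have hT := hM.2 _ hlt
      rw [← Subgroup.map_comap_eq_self_of_surjective (QuotientGroup.mk'_surjective M) S, hT,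
        Subgroup.map_top_of_surjective _ (QuotientGroup.mk'_surjective M)]
  obtain ⟨x0, hx0⟩ : ∃ x : G, x ∉ M := by
    by_contra h
    push_neg at h
    exact hM.1 (top_unique fun g _ => h g)
  have hQ : IsPGroup p (G ⧸ M) := hG.to_quotient M
  obtain ⟨n, hn⟩ := IsPGroup.iff_card.mp hQ
  have hn1 : 1 ≤ n := by
    rcases Nat.eq_zero_or_pos n with h0 | h1
    · exfalso
      rw [h0, pow_zero] at hn
      have hs : Subsingleton (G ⧸ M) := (Nat.card_eq_one_iff_unique.mp hn).1
      exact hx0 ((QuotientGroup.eq_one_iff x0).mp (Subsingleton.elim _ _))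
    · exact h1
  obtain ⟨q, hq⟩ := exists_prime_orderOf_dvd_card' (G := G ⧸ M) p
    (by rw [hn]; exact dvd_pow_self p (by omega))
  have hq1 : q ≠ 1 := by
    intro h
    rw [h, orderOf_one] at hq
    exact hp.one_lt.ne hq
  have hzq : Subgroup.zpowers q = ⊤ := by
    refine (hsub _).resolve_left ?_
    intro h
    exact hq1 (Subgroup.mem_bot.mp (h ▸ Subgroup.mem_zpowers q))
  have hcard : Nat.card (G ⧸ M) = p := by
    calc Nat.card (G ⧸ M) = Nat.card (⊤ : Subgroup (G ⧸ M)) := (Subgroup.card_top).symm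
      _ = Nat.card (Subgroup.zpowers q) := by rw [hzq]
      _ = orderOf q := Nat.card_zpowers q
      _ = p := hq
  refine ⟨hMn, ?_, ?_⟩
  · intro x
    rw [← QuotientGroup.eq_one_iff]
    have h1 : ((x ^ p : G) : G ⧸ M) = ((x : G ⧸ M)) ^ p := by
      exact QuotientGroup.mk_pow M x p
    rw [h1, ← hcard]
    exact pow_card_eq_one'
  · obtain ⟨g0, hg0⟩ := (isCyclic_of_prime_card hcard).exists_generator
    rw [commutator_def, Subgroup.commutator_le]
    intro g1 _ g2 _
    rw [← QuotientGroup.eq_one_iff]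
    have h1 : ((⁅g1, g2⁆ : G) : G ⧸ M) = ⁅((g1 : G) : G ⧸ M), ((g2 : G) : G ⧸ M)⁆ :=
      map_commutatorElement (QuotientGroup.mk' M) g1 g2
    rw [h1, commutatorElement_eq_one_iff_commute]
    obtain ⟨i, hi⟩ := hg0 ((g1 : G) : G ⧸ M)
    obtain ⟨j, hj⟩ := hg0 ((g2 : G) : G ⧸ M)
    rw [← hi, ← hj]
    exact (Commute.refl g0).zpow_zpow i j

end Aux

/-- Let `p` be an odd prime and `G` a finite `p`-group that is 2-generated
(`d(G) = 2`, i.e. generated by two elements but not cyclic) and not powerful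
(`γ₂(G) ≰ G^p`). Then `G` is full with respect to every maximal subgroup `C`:
every maximal subgroup `M ≠ C` contains a non-normal subgroup `K` of index `p²`
in `G` such that `K ∩ C` is normal in `G` and contains `G^p`. -/
theorem two_generated_not_powerful_is_full {G : Type*} [Group G] [Finite G]
    (p : ℕ) (hp : p.Prime) (hodd : Odd p) (hG : IsPGroup p G)
    (hgen : ∃ a b : G, Subgroup.closure {a, b} = ⊤)
    (hd2 : ¬ IsCyclic G)
    (hnp : ¬ commutator G ≤ Subgroup.closure {g : G | ∃ x : G, g = x ^ p}) :
    ∀ C : Subgroup G, IsCoatom C → ∀ M : Subgroup G, IsCoatom M → M ≠ C →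
      ∃ K : Subgroup G, K ≤ M ∧ K.index = p ^ 2 ∧ ¬ K.Normal ∧
        (K ⊓ C).Normal ∧
        Subgroup.closure {g : G | ∃ x : G, g = x ^ p} ≤ K ⊓ C := by
  classical
  haveI hfact : Fact p.Prime := ⟨hp⟩
  haveI : NeZero p := ⟨hp.pos.ne'⟩
  obtain ⟨a, b, hab⟩ := hgen
  intro C hC M hM hMC
  set P : Subgroup G := Subgroup.closure {g : G | ∃ x : G, g = x ^ p} with hPdef
  have hPn : P.Normal := by
    constructor
    intro n hn g
    refine Subgroup.closure_induction (p := fun w _ => g * w * g⁻¹ ∈ P) ?_ ?_ ?_ ?_ hn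
    · rintro w ⟨x, rfl⟩
      have h1 : g * x ^ p * g⁻¹ = (g * x * g⁻¹) ^ p := by rw [conj_pow]
      rw [h1]
      exact Subgroup.subset_closure ⟨g * x * g⁻¹, rfl⟩
    · simpa using P.one_mem
    · intro u v _ _ ihu ihv
      have h1 : g * (u * v) * g⁻¹ = g * u * g⁻¹ * (g * v * g⁻¹) := by group
      rw [h1]; exact mul_mem ihu ihv
    · intro u _ ihu
      have h1 : g * u⁻¹ * g⁻¹ = (g * u * g⁻¹)⁻¹ := by group
      rw [h1]; exact inv_mem ihu
  haveI := hPn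
  obtain ⟨hMn, hMp, hMc⟩ := aux_coatom hp hG hM
  obtain ⟨hCn, hCp, hCc⟩ := aux_coatom hp hG hC
  have hPM : P ≤ M := (Subgroup.closure_le _).mpr (by rintro g ⟨x, rfl⟩; exact hMp x)
  have hPC : P ≤ C := (Subgroup.closure_le _).mpr (by rintro g ⟨x, rfl⟩; exact hCp x)
  set N : Subgroup G := lowerCentralSeries (⊤ : Subgroup G) 2 ⊔ P with hNdef
  have hlcs2 : lowerCentralSeries (⊤ : Subgroup G) 2 ≤ commutator G := by
    have h := lowerCentralSeries_antitone (⊤ : Subgroup G) (one_le_two)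
    rwa [lowerCentralSeries_one] at h
  have hNM : N ≤ M := sup_le (hlcs2.trans hMc) hPM
  have hNC : N ≤ C := sup_le (hlcs2.trans hCc) hPC
  haveI : N.Normal := @Subgroup.sup_normal _ _ _ _ (Subgroup.lowerCentralSeries_normal ⊤ 2) hPn
  set φ : G →* G ⧸ N := QuotientGroup.mk' N with hφdef
  have hφ : Function.Surjective φ := QuotientGroup.mk'_surjective N
  have hker : φ.ker = N := QuotientGroup.ker_mk' N
  set A : G ⧸ N := φ a with hA
  set B : G ⧸ N := φ b with hB
  have htopH : Subgroup.closure ({A, B} : Set (G ⧸ N)) = ⊤ := by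
    have h1 : Subgroup.map φ (Subgroup.closure ({a, b} : Set G)) = ⊤ := by
      rw [hab]; exact Subgroup.map_top_of_surjective φ hφ
    rwa [MonoidHom.map_closure, Set.image_pair] at h1
  have hexp : ∀ h : G ⧸ N, h ^ p = 1 := by
    intro h
    obtain ⟨x, rfl⟩ := hφ h
    rw [← map_pow]
    have hmem : x ^ p ∈ φ.ker := by
      rw [hker]
      exact Subgroup.mem_sup_right (Subgroup.subset_closure ⟨x, rfl⟩)
    exact MonoidHom.mem_ker.mp hmem
  have hApow : A ^ p = 1 := hexp A
  have hBpow : B ^ p = 1 := hexp B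
  have e2G : lowerCentralSeries (⊤ : Subgroup G) 2 = ⁅lowerCentralSeries (⊤ : Subgroup G) 1, (⊤ : Subgroup G)⁆ :=
    rfl
  have e2H : lowerCentralSeries (⊤ : Subgroup (G ⧸ N)) 2
      = ⁅lowerCentralSeries (⊤ : Subgroup (G ⧸ N)) 1, (⊤ : Subgroup (G ⧸ N))⁆ :=
    rfl
  have hmapγ2 : Subgroup.map φ (lowerCentralSeries (⊤ : Subgroup G) 2) = lowerCentralSeries (⊤ : Subgroup (G ⧸ N)) 2 := by
    show Subgroup.map φ ⁅(⁅(⊤ : Subgroup G), ⊤⁆ : Subgroup G), ⊤⁆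
        = ⁅(⁅(⊤ : Subgroup (G ⧸ N)), ⊤⁆ : Subgroup (G ⧸ N)), ⊤⁆
    rw [Subgroup.map_commutator, Subgroup.map_commutator, Subgroup.map_top_of_surjective φ hφ]
  have hγ3 : lowerCentralSeries (⊤ : Subgroup (G ⧸ N)) 2 = ⊥ := by
    rw [← hmapγ2, Subgroup.map_eq_bot_iff, hker]
    exact le_sup_left
  have hcommH : commutator (G ⧸ N) = Subgroup.map φ (commutator G) := by
    rw [commutator_def, commutator_def, Subgroup.map_commutator,
      Subgroup.map_top_of_surjective φ hφ]
  set c : G ⧸ N := ⁅B, A⁆ with hc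
  have hcmem : c ∈ commutator (G ⧸ N) :=
    Subgroup.commutator_mem_commutator (Subgroup.mem_top B) (Subgroup.mem_top A)
  have hccomm : ∀ g : G ⧸ N, Commute c g := by
    intro g
    have h1 : ⁅c, g⁆ ∈ lowerCentralSeries (⊤ : Subgroup (G ⧸ N)) 2 := by
      rw [e2H]
      exact Subgroup.commutator_mem_commutator hcmem (Subgroup.mem_top g)
    rw [hγ3, Subgroup.mem_bot] at h1
    exact commutatorElement_eq_one_iff_commute.mp h1
  have hcp : c ^ p = 1 := hexp c
  set Z : Subgroup (G ⧸ N) := Subgroup.zpowers c with hZ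
  have hZn : Z.Normal := by
    constructor
    intro z hz g
    obtain ⟨k, rfl⟩ := Subgroup.mem_zpowers_iff.mp hz
    have hcom : Commute (c ^ k) g := (hccomm g).zpow_left k
    have h1 : g * c ^ k * g⁻¹ = c ^ k := by
      rw [← hcom.eq]; group
    rw [h1]
    exact Subgroup.zpow_mem Z (Subgroup.mem_zpowers c) k
  haveI := hZn
  have hZle : Z ≤ commutator (G ⧸ N) := by
    intro z hz
    obtain ⟨k, rfl⟩ := Subgroup.mem_zpowers_iff.mp hz
    exact Subgroup.zpow_mem _ hcmem k
  set ψ : (G ⧸ N) →* (G ⧸ N) ⧸ Z := QuotientGroup.mk' Z with hψdef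
  have hψs : Function.Surjective ψ := QuotientGroup.mk'_surjective Z
  have htopQ : Subgroup.closure ({ψ A, ψ B} : Set ((G ⧸ N) ⧸ Z)) = ⊤ := by
    have h1 : Subgroup.map ψ (Subgroup.closure ({A, B} : Set (G ⧸ N))) = ⊤ := by
      rw [htopH]; exact Subgroup.map_top_of_surjective ψ hψs
    rwa [MonoidHom.map_closure, Set.image_pair] at h1
  have habQ : ψ A * ψ B = ψ B * ψ A := by
    have h1 : ⁅ψ B, ψ A⁆ = 1 := by
      rw [← map_commutatorElement]
      exact (QuotientGroup.eq_one_iff _).mpr (Subgroup.mem_zpowers c)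
    exact (commutatorElement_eq_one_iff_commute.mp h1).eq.symm
  have hcommQ : ∀ u v : (G ⧸ N) ⧸ Z, u * v = v * u :=
    aux_comm_of_closure_pair habQ htopQ
  have hZeq : commutator (G ⧸ N) = Z := by
    refine le_antisymm ?_ hZle
    rw [commutator_def, Subgroup.commutator_le]
    intro g1 _ g2 _
    rw [← QuotientGroup.eq_one_iff]
    calc ((⁅g1, g2⁆ : G ⧸ N) : (G ⧸ N) ⧸ Z) = ⁅ψ g1, ψ g2⁆ :=
          map_commutatorElement ψ g1 g2
      _ = 1 := commutatorElement_eq_one_iff_commute.mpr (hcommQ _ _)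
  -- `G ⧸ N` is nonabelian
  have hHne : commutator (G ⧸ N) ≠ ⊥ := by
    intro hbot
    have hle : commutator G ≤ N := by
      have h1 : Subgroup.map φ (commutator G) = ⊥ := by rw [← hcommH]; exact hbot
      rw [← hker]
      exact (Subgroup.map_eq_bot_iff _).mp h1
    have hSup : ∀ k : ℕ, ⁅lowerCentralSeries (⊤ : Subgroup G) k ⊔ P, (⊤ : Subgroup G)⁆
        ≤ lowerCentralSeries (⊤ : Subgroup G) (k + 1) ⊔ P := by
      intro k
      rw [Subgroup.commutator_le]
      intro g hg t _
      rw [← SetLike.mem_coe, Subgroup.mul_normal] at hg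
      obtain ⟨x, hx, y, hy, rfl⟩ := hg
      have hid : ⁅x * y, t⁆ = x * ⁅y, t⁆ * x⁻¹ * ⁅x, t⁆ := by group
      rw [hid]
      have h1 : ⁅y, t⁆ ∈ P :=
        Subgroup.commutator_le_left P ⊤ (Subgroup.commutator_mem_commutator hy (Subgroup.mem_top t))
      have h2 : x * ⁅y, t⁆ * x⁻¹ ∈ P := hPn.conj_mem _ h1 x
      have h3 : ⁅x, t⁆ ∈ (⁅lowerCentralSeries (⊤ : Subgroup G) k, (⊤ : Subgroup G)⁆ : Subgroup G) :=
        Subgroup.commutator_mem_commutator hx (Subgroup.mem_top t)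
      exact mul_mem (Subgroup.mem_sup_right h2) (Subgroup.mem_sup_left h3)
    have key : ∀ j : ℕ, commutator G ≤ lowerCentralSeries (⊤ : Subgroup G) (j + 2) ⊔ P := by
      intro j
      induction j with
      | zero => exact hle.trans hNdef.le
      | succ j ih =>
        have h1 : lowerCentralSeries (⊤ : Subgroup G) 2 ≤ lowerCentralSeries (⊤ : Subgroup G) (j + 3) ⊔ P := by
          rw [e2G]
          calc ⁅lowerCentralSeries (⊤ : Subgroup G) 1, (⊤ : Subgroup G)⁆
              ≤ ⁅lowerCentralSeries (⊤ : Subgroup G) (j + 2) ⊔ P, (⊤ : Subgroup G)⁆ := by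
                refine Subgroup.commutator_mono ?_ le_rfl
                change commutator G ≤ _
                exact ih
            _ ≤ lowerCentralSeries (⊤ : Subgroup G) (j + 2 + 1) ⊔ P := hSup (j + 2)
        exact hle.trans (hNdef.le.trans (sup_le h1 le_sup_right))
    obtain ⟨k, hk⟩ := nilpotent_iff_lowerCentralSeries.mp hG.isNilpotent
    have h2 := key k
    have h3 : lowerCentralSeries (⊤ : Subgroup G) (k + 2) ≤ ⊥ := by
      rw [← hk]; exact lowerCentralSeries_antitone ⊤ (by omega)
    exact hnp (h2.trans (sup_le (h3.trans bot_le) le_rfl))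
  have hc1 : c ≠ 1 := by
    intro h
    apply hHne
    rw [hZeq, hZ, h, Subgroup.zpowers_one_eq_bot]
  have hco : orderOf c = p := orderOf_eq_prime hcp hc1
  have hZcard : Nat.card Z = p := by rw [hZ, Nat.card_zpowers, hco]
  letI : CommGroup ((G ⧸ N) ⧸ Z) :=
    { (inferInstance : Group ((G ⧸ N) ⧸ Z)) with mul_comm := hcommQ }
  have hψAp : (ψ A) ^ p = 1 := by rw [← map_pow, hApow, map_one]
  have hψBp : (ψ B) ^ p = 1 := by rw [← map_pow, hBpow, map_one]
  have hsurj2 : Function.Surjective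
      (fun t : ZMod p × ZMod p => (ψ A) ^ (t.1.val) * (ψ B) ^ (t.2.val)) := by
    intro z
    have hz : z ∈ Subgroup.closure ({ψ A, ψ B} : Set ((G ⧸ N) ⧸ Z)) := by
      rw [htopQ]; exact Subgroup.mem_top z
    obtain ⟨m, n, rfl⟩ := Subgroup.mem_closure_pair.mp hz
    refine ⟨((m : ZMod p), (n : ZMod p)), ?_⟩
    simp only
    rw [← aux_zpow_val hp hψAp m, ← aux_zpow_val hp hψBp n]
  have hq2 : Nat.card ((G ⧸ N) ⧸ Z) ≤ p * p := by
    have h1 := Nat.card_le_card_of_surjective _ hsurj2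
    rwa [Nat.card_prod, Nat.card_zmod] at h1
  have hup : Nat.card (G ⧸ N) ≤ p ^ 3 := by
    have h1 := Subgroup.card_mul_index Z
    rw [hZcard, Subgroup.index_eq_card] at h1
    calc Nat.card (G ⧸ N) = p * Nat.card ((G ⧸ N) ⧸ Z) := h1.symm
      _ ≤ p * (p * p) := Nat.mul_le_mul le_rfl hq2
      _ = p ^ 3 := by ring
  have hHp : IsPGroup p (G ⧸ N) := hG.to_quotient N
  obtain ⟨n, hn⟩ := IsPGroup.iff_card.mp hHp
  have hsmall : n ≤ 2 → False := by
    intro hle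
    apply hc1
    have hcomm3 : B * A = A * B := by
      interval_cases n
      · have hcard1 : Nat.card (G ⧸ N) = 1 := by rw [hn, pow_zero]
        have hs : Subsingleton (G ⧸ N) := (Nat.card_eq_one_iff_unique.mp hcard1).1
        exact Subsingleton.elim _ _
      · have hcard : Nat.card (G ⧸ N) = p := by rw [hn, pow_one]
        obtain ⟨g0, hg0⟩ := (isCyclic_of_prime_card hcard).exists_generator
        obtain ⟨i, hi⟩ := hg0 B
        obtain ⟨j, hj⟩ := hg0 A
        rw [← hi, ← hj]
        exact (Commute.refl g0).zpow_zpow i j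
      · exact IsPGroup.commutative_of_card_eq_prime_sq hn B A
    rw [hc, commutatorElement_eq_one_iff_commute]
    exact hcomm3
  have hn3 : n = 3 := by
    have hle3 : n ≤ 3 := by
      rw [hn] at hup
      exact (Nat.pow_le_pow_iff_right hp.one_lt).mp hup
    rcases Nat.lt_or_ge n 3 with h | h
    · exact absurd (by omega : n ≤ 2) (fun hh => hsmall hh)
    · exact le_antisymm hle3 h
  have hcardH : Nat.card (G ⧸ N) = p ^ 3 := by rw [hn, hn3]
  -- pick the element x ∈ M \ C
  obtain ⟨x, hxM, hxC⟩ : ∃ x : G, x ∈ M ∧ x ∉ C := by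
    have hnle : ¬ M ≤ C := fun hle => hC.1 (hM.2 C (lt_of_le_of_ne hle hMC))
    obtain ⟨x, hx1, hx2⟩ := SetLike.not_le_iff_exists.mp hnle
    exact ⟨x, hx1, hx2⟩
  set y : G ⧸ N := φ x with hy
  have hy1 : y ≠ 1 := by
    intro h
    apply hxC
    apply hNC
    rw [← hker]
    exact MonoidHom.mem_ker.mpr h
  have hyo : orderOf y = p := orderOf_eq_prime (hexp y) hy1
  set K' : Subgroup (G ⧸ N) := Subgroup.zpowers y with hK'
  have hK'card : Nat.card K' = p := by rw [hK', Nat.card_zpowers, hyo]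
  set K : Subgroup G := Subgroup.comap φ K' with hKdef
  have hyC' : y ∉ Subgroup.map φ C := by
    rintro ⟨c0, hc0, hc0y⟩
    apply hxC
    have h1 : φ (c0⁻¹ * x) = 1 := by
      rw [map_mul, map_inv, hc0y, ← hy, inv_mul_cancel]
    have h2 : c0⁻¹ * x ∈ C := hNC (by rw [← hker]; exact MonoidHom.mem_ker.mpr h1)
    have h3 : x = c0 * (c0⁻¹ * x) := by group
    rw [h3]; exact mul_mem hc0 h2
  have hKM : K ≤ M := by
    intro g hg
    rw [hKdef, Subgroup.mem_comap] at hg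
    obtain ⟨n', hn'⟩ := Subgroup.mem_zpowers_iff.mp hg
    have h1 : φ (g * (x ^ n')⁻¹) = 1 := by
      rw [map_mul, map_inv, map_zpow, ← hy, hn', mul_inv_cancel]
    have h2 : g * (x ^ n')⁻¹ ∈ M := hNM (by rw [← hker]; exact MonoidHom.mem_ker.mpr h1)
    have h3 : g = g * (x ^ n')⁻¹ * x ^ n' := by group
    rw [h3]; exact mul_mem h2 (Subgroup.zpow_mem M hxM n')
  have hK'idx : K'.index = p ^ 2 := by
    have h1 := Subgroup.card_mul_index K'
    rw [hK'card, hcardH] at h1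
    have h2 : p * K'.index = p * p ^ 2 := by rw [h1]; ring
    exact Nat.eq_of_mul_eq_mul_left hp.pos h2
  have hKidx : K.index = p ^ 2 := by
    rw [hKdef, Subgroup.index_comap_of_surjective _ hφ, hK'idx]
  have hKnn : ¬ K.Normal := by
    intro hKn
    have hmapK : Subgroup.map φ K = K' := by
      rw [hKdef]; exact Subgroup.map_comap_eq_self_of_surjective hφ K'
    have hK'n : K'.Normal := hmapK ▸ hKn.map φ hφ
    haveI := hK'n
    have hKq : Nat.card ((G ⧸ N) ⧸ K') = p ^ 2 := by
      rw [← Subgroup.index_eq_card, hK'idx]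
    have hcommK := IsPGroup.commutative_of_card_eq_prime_sq hKq
    have hleK : commutator (G ⧸ N) ≤ K' := by
      rw [commutator_def, Subgroup.commutator_le]
      intro g1 _ g2 _
      rw [← QuotientGroup.eq_one_iff]
      calc ((⁅g1, g2⁆ : G ⧸ N) : (G ⧸ N) ⧸ K')
          = ⁅((g1 : G ⧸ N) : (G ⧸ N) ⧸ K'), ((g2 : G ⧸ N) : (G ⧸ N) ⧸ K')⁆ :=
            map_commutatorElement (QuotientGroup.mk' K') g1 g2
        _ = 1 := commutatorElement_eq_one_iff_commute.mpr (hcommK _ _)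
    have hZK : Z = K' := by
      refine Subgroup.eq_of_le_of_card_ge (hZle.trans hleK) ?_
      rw [hK'card, hZcard]
    have hyC2 : y ∈ Subgroup.map φ C := by
      have h1 : y ∈ K' := Subgroup.mem_zpowers y
      rw [← hZK] at h1
      have h2 : y ∈ commutator (G ⧸ N) := by rw [hZeq]; exact h1
      rw [hcommH] at h2
      exact Subgroup.map_mono hCc h2
    exact hyC' hyC2
  have hCcomap : Subgroup.comap φ (Subgroup.map φ C) = C := by
    rw [Subgroup.comap_map_eq, hker, sup_of_le_left hNC]
  have hinf' : K' ⊓ Subgroup.map φ C = ⊥ := by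
    have hdvd : Nat.card (↥(K' ⊓ Subgroup.map φ C)) ∣ p := by
      rw [← hK'card]
      exact Subgroup.card_dvd_of_le inf_le_left
    rcases Nat.Prime.eq_one_or_self_of_dvd hp _ hdvd with h1 | h2
    · exact Subgroup.card_eq_one.mp h1
    · exfalso
      have heq : K' ⊓ Subgroup.map φ C = K' :=
        Subgroup.eq_of_le_of_card_ge inf_le_left (by rw [h2, hK'card])
      apply hyC'
      have hle : K' ≤ Subgroup.map φ C := heq.symm.le.trans inf_le_right
      exact hle (Subgroup.mem_zpowers y)
  have hKC : K ⊓ C = N := by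
    rw [hKdef, ← hCcomap, ← Subgroup.comap_inf, hinf', MonoidHom.comap_bot, hker]
  refine ⟨K, hKM, hKidx, hKnn, ?_, ?_⟩
  · rw [hKC, hNdef]; infer_instance
  · rw [hKC, hNdef]; exact le_sup_right
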